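/- Let N and k both be even positive integers. Then the sum of 2^(p_m + t_m), taken over all divisors m of N such that 2*m^2 divides N*k, equals σ(N), the number of positive divisors of N. -/

import Mathlib

/-- `p_m`: the number of odd primes dividing `N*m'/m^2` but not `k/m'`, where `m' = gcd(m,k)`. -/
def pm (N k m : ℕ) : ℕ :=
  ((N * Nat.gcd m k / m ^ 2).primeFactors.filter
    (fun p => p ≠ 2 ∧ ¬ p ∣ k / Nat.gcd m k)).card

/-- `t_m`: equal to `0` if `N*m'/m^2` is odd, or `4 ∣ k/m'`, or both
`N*m'/m^2 ≡ 2 (mod 4)` and `k/m'` is odd; and equal to `1` otherwise. -/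
def tm (N k m : ℕ) : ℕ :=
  if Odd (N * Nat.gcd m k / m ^ 2) ∨ 4 ∣ k / Nat.gcd m k ∨
      ((N * Nat.gcd m k / m ^ 2) % 4 = 2 ∧ Odd (k / Nat.gcd m k)) then 0 else 1

open Finset


-- from t1.lean

lemma oddLocal (e c : ℕ) :
    ∑ b ∈ range (e+1), (if 2*b ≤ e+c then (if c ≤ b ∧ 2*b < e+c then 2 else 1) else 0) = e+1 := by
  have h : ∀ b, (if 2*b ≤ e+c then (if c ≤ b ∧ 2*b < e+c then 2 else 1) else 0)
      = (if 2*b ≤ e+c then 1 else 0) + (if c ≤ b ∧ 2*b < e+c then 1 else 0) := by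
    intro b; split_ifs <;> omega
  simp_rw [h, Finset.sum_add_distrib, ← Finset.card_filter]
  have h1 : (range (e+1)).filter (fun b => 2*b ≤ e+c) = range (min e ((e+c)/2) + 1) := by
    ext b; simp only [mem_filter, mem_range]; omega
  have h2 : (range (e+1)).filter (fun b => c ≤ b ∧ 2*b < e+c) = Ico c (min (e+1) ((e+c+1)/2)) := by
    ext b; simp only [mem_filter, mem_range, mem_Ico]; omega
  rw [h1, h2, card_range, Nat.card_Ico]; omega

lemma twoLocal (a c : ℕ) (hc : 1 ≤ c) :
    ∑ b ∈ range (a+1), (if 2*b+1 ≤ a+c then (if c-1 ≤ b ∧ 2*b+2 ≤ a+c then 2 else 1) else 0) = a+1 := by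
  have h : ∀ b, (if 2*b+1 ≤ a+c then (if c-1 ≤ b ∧ 2*b+2 ≤ a+c then 2 else 1) else 0)
      = (if 2*b+1 ≤ a+c then 1 else 0) + (if c-1 ≤ b ∧ 2*b+2 ≤ a+c then 1 else 0) := by
    intro b; split_ifs <;> omega
  simp_rw [h, Finset.sum_add_distrib, ← Finset.card_filter]
  have h1 : (range (a+1)).filter (fun b => 2*b+1 ≤ a+c) = range (min a ((a+c-1)/2) + 1) := by
    ext b; simp only [mem_filter, mem_range]; omega
  have h2 : (range (a+1)).filter (fun b => c-1 ≤ b ∧ 2*b+2 ≤ a+c) = Ico (c-1) (min (a+1) ((a+c)/2)) := by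
    ext b; simp only [mem_filter, mem_range, mem_Ico]; omega
  rw [h1, h2, card_range, Nat.card_Ico]; omega

-- from t2.lean

lemma sum_divisors_coprime_mul {u v : ℕ} (h : Nat.Coprime u v) (F : ℕ → ℕ) :
    ∑ m ∈ (u*v).divisors, F m = ∑ x ∈ u.divisors, ∑ y ∈ v.divisors, F (x*y) := by
  rw [Nat.divisors_mul, ← Finset.sum_product', ← Finset.image_mul_product, Finset.sum_image]
  rintro ⟨x, y⟩ hxy ⟨x', y'⟩ hxy' hee
  simp only [Finset.coe_product, Set.mem_prod, Finset.mem_coe, mem_product, Nat.mem_divisors] at hxy hxy'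
  obtain ⟨⟨hx, hu⟩, hy, hv⟩ := hxy
  obtain ⟨⟨hx', _⟩, hy', _⟩ := hxy'
  simp only at hee
  have hxx : x = x' := by
    have e1 : Nat.gcd (x*y) u = x := by
      rw [Nat.Coprime.gcd_mul_right_cancel]
      · exact Nat.gcd_eq_left hx
      · exact Nat.Coprime.coprime_dvd_left hy h.symm
    have e2 : Nat.gcd (x'*y') u = x' := by
      rw [Nat.Coprime.gcd_mul_right_cancel]
      · exact Nat.gcd_eq_left hx'
      · exact Nat.Coprime.coprime_dvd_left hy' h.symm
    rw [← e1, ← e2, hee]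
  subst hxx
  have hx0 : x ≠ 0 := by rintro rfl; exact hu (zero_dvd_iff.mp hx)
  have : y = y' := Nat.eq_of_mul_eq_mul_left (Nat.pos_of_ne_zero hx0) hee
  simp [this]

lemma coprime_pow_of_not_dvd {p x n : ℕ} (hp : p.Prime) (hx : ¬ p ∣ x) :
    Nat.Coprime (p^n) x :=
  Nat.Coprime.pow_left _ ((Nat.Prime.coprime_iff_not_dvd hp).mpr hx)

lemma gcdSplit {p b c m' k' : ℕ} (hp : p.Prime) (hm' : ¬ p ∣ m') (hk' : ¬ p ∣ k') :
    Nat.gcd (p^b * m') (p^c * k') = p^(min b c) * Nat.gcd m' (p^c * k') := by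
  have hg : Nat.gcd m' (p^c * k') = Nat.gcd m' k' :=
    Nat.Coprime.gcd_mul_left_cancel_right _ (coprime_pow_of_not_dvd hp hm')
  rw [hg]
  rcases le_total b c with hbc | hbc
  · rw [min_eq_left hbc]
    obtain ⟨d, rfl⟩ := Nat.exists_eq_add_of_le hbc
    rw [pow_add, mul_assoc, Nat.gcd_mul_left]
    congr 1
    rw [Nat.Coprime.gcd_mul_left_cancel_right _ (coprime_pow_of_not_dvd hp hm')]
  · rw [min_eq_right hbc]
    obtain ⟨d, rfl⟩ := Nat.exists_eq_add_of_le hbc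
    rw [pow_add, mul_assoc, Nat.gcd_mul_left]
    congr 1
    rw [Nat.Coprime.gcd_mul_left_cancel _ (coprime_pow_of_not_dvd hp hk')]

-- from t3.lean

-- m^2 ∣ N * gcd m k
lemma sq_dvd_mul_gcd {N k m : ℕ} (hN : 0 < N) (hk : 0 < k) (hm : m ∣ N)
    (hcond : 2 * m^2 ∣ N * k) : m^2 ∣ N * Nat.gcd m k := by
  have hm0 : m ≠ 0 := by rintro rfl; simp at hm; omega
  have hg0 : Nat.gcd m k ≠ 0 := fun h => hm0 (Nat.eq_zero_of_gcd_eq_zero_left h)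
  rw [← Nat.factorization_le_iff_dvd (pow_ne_zero 2 hm0) (by positivity)]
  have hc2 : (2 * m^2).factorization ≤ (N*k).factorization := by
    rw [Nat.factorization_le_iff_dvd (by positivity) (by positivity)]; exact hcond
  intro q
  have h1 := hc2 q
  rw [Nat.factorization_mul (by norm_num) (pow_ne_zero 2 hm0),
      Nat.factorization_mul hN.ne' hk.ne'] at h1
  have h2 : m.factorization q ≤ N.factorization q :=
    (Nat.factorization_le_iff_dvd hm0 hN.ne').mpr hm q
  rw [Nat.factorization_mul hN.ne' hg0, Nat.factorization_gcd hm0 hk.ne']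
  simp only [Nat.factorization_pow, Finsupp.coe_add, Finsupp.coe_smul, Pi.add_apply,
    Pi.smul_apply, smul_eq_mul, Finsupp.inf_apply] at h1 ⊢
  rcases le_total (m.factorization q) (k.factorization q) with h | h
  · rw [min_eq_left h]; omega
  · rw [min_eq_right h]; omega

-- from t5.lean

lemma dvd_pow_mul_iff {q p x u : ℕ} (hcop : Nat.Coprime q (p^x)) :
    q ∣ p^x * u ↔ q ∣ u := by
  constructor
  · intro h
    first
    | exact hcop.dvd_of_dvd_mul_left h
    | exact hcop.dvd_of_dvd_mul_right h
    | exact hcop.dvd_of_dvd_mul_left (by rwa [mul_comm] at h)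
    | exact hcop.dvd_of_dvd_mul_right (by rwa [mul_comm] at h)
  · intro h; exact h.mul_left _

lemma pm_tm_split {p e c b N' k' m' : ℕ} (hp : p.Prime) (hp2 : p ≠ 2)
    (hN' : 0 < N') (hk' : 0 < k') (hpN' : ¬ p ∣ N') (hpk' : ¬ p ∣ k')
    (hm'N : m' ∣ N') (hb : b ≤ e) (hbc : 2*b ≤ e + c)
    (hcond' : 2 * m'^2 ∣ N' * (p^c * k')) :
    pm (p^e * N') (p^c * k') (p^b * m') =
      (if c ≤ b ∧ 2*b < e + c then 1 else 0) + pm N' (p^c * k') m' ∧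
    tm (p^e * N') (p^c * k') (p^b * m') = tm N' (p^c * k') m' := by
  have hm'0 : m' ≠ 0 := ne_zero_of_dvd_ne_zero hN'.ne' hm'N
  have hpm' : ¬ p ∣ m' := fun h => hpN' (h.trans hm'N)
  have hk0 : (0:ℕ) < p^c * k' := Nat.mul_pos (pow_pos hp.pos c) hk'
  have hgcd : Nat.gcd (p^b * m') (p^c*k') = p^(min b c) * Nat.gcd m' (p^c*k') :=
    gcdSplit hp hpm' hpk'
  set g' := Nat.gcd m' (p^c*k') with hg'def
  have hg'0 : 0 < g' := Nat.gcd_pos_of_pos_left _ (Nat.pos_of_ne_zero hm'0)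
  have hpg' : ¬ p ∣ g' := fun h => hpm' (h.trans (Nat.gcd_dvd_left _ _))
  have hdvd' : m'^2 ∣ N' * g' := sq_dvd_mul_gcd hN' hk0 hm'N hcond'
  set A' := N' * g' / m'^2 with hA'
  have hA'def : A' * m'^2 = N' * g' := Nat.div_mul_cancel hdvd'
  have hA'0 : A' ≠ 0 := by
    intro h; rw [h, zero_mul] at hA'def
    exact (by positivity : (0:ℕ) < N' * g').ne' hA'def.symm
  have hpA' : ¬ p ∣ A' := by
    intro h
    have h2 : p ∣ N' * g' := hA'def ▸ Dvd.dvd.mul_right h _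
    rcases (Nat.Prime.dvd_mul hp).mp h2 with h3 | h3
    · exact hpN' h3
    · exact hpg' h3
  have hmin : 2*b ≤ e + min b c := by omega
  have hAeq : (p^e*N') * Nat.gcd (p^b*m') (p^c*k') / (p^b*m')^2
      = p^(e + min b c - 2*b) * A' := by
    apply Nat.div_eq_of_eq_mul_left
      (pow_pos (Nat.mul_pos (pow_pos hp.pos b) (Nat.pos_of_ne_zero hm'0)) 2)
    rw [hgcd, mul_pow, ← pow_mul]
    calc p ^ e * N' * (p ^ min b c * g')
        = p ^ (e + min b c) * (N' * g') := by rw [pow_add]; ring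
      _ = p ^ (e + min b c - 2*b) * p ^ (b*2) * (A' * m'^2) := by
          rw [← pow_add, hA'def]; congr 2; omega
      _ = p ^ (e + min b c - 2*b) * A' * (p ^ (b*2) * m'^2) := by ring
  have hg'k' : g' ∣ k' := by
    have h1 : g' ∣ p^c * k' := Nat.gcd_dvd_right _ _
    exact (coprime_pow_of_not_dvd hp hpg').symm.dvd_of_dvd_mul_left
      (by rwa [mul_comm] at h1)
  set u := k' / g' with hu'
  have hu : u * g' = k' := Nat.div_mul_cancel hg'k'
  have hpu : ¬ p ∣ u := fun h => hpk' (h.trans ⟨g', hu.symm⟩)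
  have hgcdpos : 0 < Nat.gcd (p^b*m') (p^c*k') :=
    Nat.gcd_pos_of_pos_left _ (Nat.mul_pos (pow_pos hp.pos b) (Nat.pos_of_ne_zero hm'0))
  have hBeq : (p^c*k') / Nat.gcd (p^b*m') (p^c*k') = p^(c - min b c) * u := by
    apply Nat.div_eq_of_eq_mul_left hgcdpos
    rw [hgcd]
    calc p^c*k' = p^(c - min b c) * p^(min b c) * (u * g') := by
          rw [← pow_add, hu]; congr 2; omega
      _ = p ^ (c - min b c) * u * (p ^ min b c * g') := by ring
  have hB'eq : (p^c*k') / Nat.gcd m' (p^c*k') = p^c * u := by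
    apply Nat.div_eq_of_eq_mul_left hg'0
    calc p^c*k' = p^c * (u * g') := by rw [hu]
      _ = p^c * u * g' := by ring
  have hA'form : N' * Nat.gcd m' (p^c*k') / m'^2 = A' := rfl
  have hqne : ∀ q ∈ A'.primeFactors, q ≠ p := by
    intro q hq
    rintro rfl
    exact hpA' (Nat.dvd_of_mem_primeFactors hq)
  constructor
  · unfold pm
    rw [hAeq, hBeq, hA'form, hB'eq,
      Nat.primeFactors_mul (pow_ne_zero _ hp.pos.ne') hA'0, Finset.filter_union,
      Finset.card_union_of_disjoint]
    · congr 1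
      · -- card of filter on (p^γ).primeFactors
        by_cases hγ : e + min b c - 2*b = 0
        · rw [hγ, pow_zero, Nat.primeFactors_one]
          simp only [Finset.filter_empty, Finset.card_empty]
          have : ¬ (c ≤ b ∧ 2*b < e + c) := by omega
          rw [if_neg this]
        · rw [Nat.primeFactors_prime_pow hγ hp]
          rw [Finset.filter_singleton]
          by_cases hcb : c ≤ b
          · have hmin2 : min b c = c := min_eq_right hcb
            have hppB : ¬ p ∣ p^(c - min b c) * u := by
              rw [hmin2, Nat.sub_self, pow_zero, one_mul]; exact hpu
            rw [if_pos ⟨hp2, hppB⟩, Finset.card_singleton, if_pos ⟨hcb, by omega⟩]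
          · have hmin2 : min b c = b := min_eq_left (by omega)
            have hppB : p ∣ p^(c - min b c) * u :=
              Dvd.dvd.mul_right (dvd_pow (dvd_refl p) (by omega)) u
            rw [if_neg (by tauto), Finset.card_empty, if_neg (by tauto)]
      · -- A' part equals pm N' k m'
        apply congrArg
        apply Finset.filter_congr
        intro q hq
        have hq2 : q ≠ p := hqne q hq
        have hqp : q.Prime := Nat.prime_of_mem_primeFactors hq
        have hcop : Nat.Coprime q (p^(c - min b c)) :=
          Nat.Coprime.pow_right _ ((Nat.coprime_primes hqp hp).mpr hq2)
        have hcop2 : Nat.Coprime q (p^c) :=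
          Nat.Coprime.pow_right _ ((Nat.coprime_primes hqp hp).mpr hq2)
        simp only [dvd_pow_mul_iff hcop, dvd_pow_mul_iff hcop2]
    · -- disjoint
      rw [Finset.disjoint_left]
      intro q hq1 hq2
      have h1 : q ∣ p ^ (e + min b c - 2*b) :=
        Nat.dvd_of_mem_primeFactors (Finset.mem_filter.mp hq1).1
      have hqp : q.Prime := Nat.prime_of_mem_primeFactors (Finset.mem_filter.mp hq1).1
      have : q = p := (Nat.prime_dvd_prime_iff_eq hqp hp).mp (hqp.dvd_of_dvd_pow h1)
      exact hqne q (Finset.mem_filter.mp hq2).1 this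
  · unfold tm
    rw [hAeq, hBeq, hA'form, hB'eq]
    have hcop2 : Nat.Coprime 2 p := (Nat.coprime_primes Nat.prime_two hp).mpr (Ne.symm hp2)
    have key2 : ∀ x y : ℕ, (2 ∣ p^x * y ↔ 2 ∣ y) := fun x y =>
      dvd_pow_mul_iff (Nat.Coprime.pow_right _ hcop2)
    have key4 : ∀ x y : ℕ, (4 ∣ p^x * y ↔ 4 ∣ y) := by
      intro x y
      have h4 : Nat.Coprime 4 (p^x) := by
        have : (4:ℕ) = 2^2 := by norm_num
        rw [this]
        exact hcop2.pow _ _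
      exact dvd_pow_mul_iff h4
    have hoddp : Odd (p ^ (e + min b c - 2*b)) := (hp.odd_of_ne_two hp2).pow
    have oddIff : ∀ n : ℕ, Odd n ↔ ¬ 2 ∣ n := by intro n; rw [Nat.odd_iff]; omega
    have mod4 : ∀ n : ℕ, n % 4 = 2 ↔ (2 ∣ n ∧ ¬ 4 ∣ n) := by intro n; omega
    have i1 : Odd (p ^ (e + min b c - 2*b) * A') ↔ Odd A' := by
      rw [Nat.odd_mul]; simp [hoddp]
    have i2 : (4 ∣ p^(c - min b c) * u) ↔ (4 ∣ p^c * u) := by rw [key4, key4]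
    have i3 : (p ^ (e + min b c - 2*b) * A') % 4 = 2 ↔ A' % 4 = 2 := by
      rw [mod4, mod4, key2, key4]
    have i4 : Odd (p^(c - min b c) * u) ↔ Odd (p^c * u) := by
      rw [oddIff, oddIff, key2, key2]
    exact if_congr (or_congr i1 (or_congr i2 (and_congr i3 i4))) rfl rfl

-- from t6.lean

lemma Gsum_split {p e c N' k' : ℕ} (hp : p.Prime) (hp2 : p ≠ 2)
    (hN' : 0 < N') (hk' : 0 < k') (hpN' : ¬ p ∣ N') (hpk' : ¬ p ∣ k') :
    ∑ m ∈ ((p^e * N').divisors.filter (fun m => 2*m^2 ∣ (p^e*N') * (p^c*k'))),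
        2^(pm (p^e*N') (p^c*k') m + tm (p^e*N') (p^c*k') m)
      = (e+1) * ∑ m' ∈ (N'.divisors.filter (fun m' => 2*m'^2 ∣ N' * (p^c*k'))),
        2^(pm N' (p^c*k') m' + tm N' (p^c*k') m') := by
  have hp2' : ¬ p ∣ 2 := fun h => hp2 ((Nat.prime_dvd_prime_iff_eq hp Nat.prime_two).mp h)
  rw [Finset.sum_filter, Finset.sum_filter,
    sum_divisors_coprime_mul (coprime_pow_of_not_dvd hp hpN'),
    Nat.sum_divisors_prime_pow hp]
  have step : ∀ b ∈ range (e+1), ∀ m' ∈ N'.divisors,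
      (if 2*(p^b*m')^2 ∣ (p^e*N')*(p^c*k')
        then 2^(pm (p^e*N') (p^c*k') (p^b*m') + tm (p^e*N') (p^c*k') (p^b*m')) else 0)
      = (if 2*b ≤ e + c then (if c ≤ b ∧ 2*b < e+c then 2 else 1) else 0) *
        (if 2*m'^2 ∣ N'*(p^c*k') then 2^(pm N' (p^c*k') m' + tm N' (p^c*k') m') else 0) := by
    intro b hb m' hm'
    rw [mem_range] at hb
    have hb' : b ≤ e := by omega
    rw [Nat.mem_divisors] at hm'
    obtain ⟨hm'N, _⟩ := hm'
    have hpm' : ¬ p ∣ m' := fun h => hpN' (h.trans hm'N)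
    have hpd : ¬ p ∣ 2 * m'^2 := by
      intro h
      rcases (Nat.Prime.dvd_mul hp).mp h with h1 | h1
      · exact hp2' h1
      · exact hpm' (hp.dvd_of_dvd_pow h1)
    have hrw1 : 2*(p^b*m')^2 = p^(2*b) * (2*m'^2) := by ring
    have hrw2 : (p^e*N')*(p^c*k') = p^(e+c) * (N'*k') := by rw [pow_add]; ring
    have hrw3 : N'*(p^c*k') = p^c * (N'*k') := by ring
    have hcop1 : Nat.Coprime (p^(2*b)) (N'*k') := by
      apply coprime_pow_of_not_dvd hp
      intro h
      rcases (Nat.Prime.dvd_mul hp).mp h with h1 | h1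
      · exact hpN' h1
      · exact hpk' h1
    have hcop2 : Nat.Coprime (2*m'^2) (p^(e+c)) := (coprime_pow_of_not_dvd hp hpd).symm
    have hcop3 : Nat.Coprime (2*m'^2) (p^c) := (coprime_pow_of_not_dvd hp hpd).symm
    have condiff : 2*(p^b*m')^2 ∣ (p^e*N')*(p^c*k') ↔
        (2*b ≤ e+c ∧ 2*m'^2 ∣ N'*(p^c*k')) := by
      rw [hrw1, hrw2, hrw3]
      constructor
      · intro h
        have hA : p^(2*b) ∣ p^(e+c)*(N'*k') := (dvd_mul_right _ _).trans h
        have hA2 : p^(2*b) ∣ p^(e+c) := by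
          first
          | exact hcop1.dvd_of_dvd_mul_right hA
          | exact hcop1.dvd_of_dvd_mul_left hA
        have hle : 2*b ≤ e+c := (Nat.pow_dvd_pow_iff_le_right hp.one_lt).mp hA2
        have hB : 2*m'^2 ∣ p^(e+c)*(N'*k') := (dvd_mul_left _ _).trans h
        have hB2 : 2*m'^2 ∣ N'*k' := by
          first
          | exact hcop2.dvd_of_dvd_mul_left hB
          | exact hcop2.dvd_of_dvd_mul_right hB
        exact ⟨hle, hB2.mul_left _⟩
      · rintro ⟨h1, h2⟩
        have h2' : 2*m'^2 ∣ N'*k' := by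
          first
          | exact hcop3.dvd_of_dvd_mul_left h2
          | exact hcop3.dvd_of_dvd_mul_right h2
        exact mul_dvd_mul (pow_dvd_pow p h1) h2'
    by_cases hcnd : 2*(p^b*m')^2 ∣ (p^e*N')*(p^c*k')
    · obtain ⟨hc1, hc2⟩ := condiff.mp hcnd
      obtain ⟨e1, e2⟩ := pm_tm_split hp hp2 hN' hk' hpN' hpk' hm'N hb' hc1 hc2
      rw [if_pos hcnd, if_pos hc1, if_pos hc2, e1, e2]
      split_ifs with h
      · rw [pow_add, pow_add, pow_add, pow_one]; ring
      · rw [pow_add, pow_add, pow_zero]; ring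
    · rw [if_neg hcnd]
      rw [condiff] at hcnd
      push_neg at hcnd
      by_cases h1 : 2*b ≤ e+c
      · rw [if_pos h1, if_neg (hcnd h1), mul_zero]
      · rw [if_neg h1, zero_mul]
  rw [Finset.sum_congr rfl (fun b hb => Finset.sum_congr rfl (fun m' hm' => step b hb m' hm'))]
  have : ∀ b ∈ range (e+1),
      ∑ m' ∈ N'.divisors, ((if 2*b ≤ e + c then (if c ≤ b ∧ 2*b < e+c then 2 else 1) else 0) *
        (if 2*m'^2 ∣ N'*(p^c*k') then 2^(pm N' (p^c*k') m' + tm N' (p^c*k') m') else 0))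
      = (if 2*b ≤ e + c then (if c ≤ b ∧ 2*b < e+c then 2 else 1) else 0) *
        ∑ m' ∈ N'.divisors,
        (if 2*m'^2 ∣ N'*(p^c*k') then 2^(pm N' (p^c*k') m' + tm N' (p^c*k') m') else 0) := by
    intro b _
    rw [Finset.mul_sum]
  rw [Finset.sum_congr rfl this, ← Finset.sum_mul, oddLocal]

-- from t7.lean

lemma Gsum_base {a c k' : ℕ} (ha : 1 ≤ a) (hc : 1 ≤ c) (hk' : 0 < k') (hk2 : ¬ 2 ∣ k') :
    ∑ m ∈ ((2^a).divisors.filter (fun m => 2*m^2 ∣ 2^a * (2^c*k'))),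
        2^(pm (2^a) (2^c*k') m + tm (2^a) (2^c*k') m) = a+1 := by
  rw [Finset.sum_filter, Nat.sum_divisors_prime_pow Nat.prime_two]
  refine Eq.trans (Finset.sum_congr rfl ?_) (twoLocal a c hc)
  intro b hb
  rw [mem_range] at hb
  have hb' : b ≤ a := by omega
  have hcopk : ∀ x : ℕ, Nat.Coprime (2^x) k' :=
    fun x => Nat.Coprime.pow_left _ ((Nat.Prime.coprime_iff_not_dvd Nat.prime_two).mpr hk2)
  have hrw1 : 2*(2^b)^2 = 2^(2*b+1) := by rw [← pow_mul, ← pow_succ']; ring_nf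
  have hrw2 : 2^a * (2^c*k') = 2^(a+c) * k' := by rw [pow_add]; ring
  have condiff : 2*(2^b)^2 ∣ 2^a * (2^c*k') ↔ 2*b+1 ≤ a+c := by
    rw [hrw1, hrw2]
    constructor
    · intro h
      have h2 : (2:ℕ)^(2*b+1) ∣ 2^(a+c) := by
        first
        | exact (hcopk _).dvd_of_dvd_mul_right h
        | exact (hcopk _).dvd_of_dvd_mul_left h
      exact (Nat.pow_dvd_pow_iff_le_right (by norm_num)).mp h2
    · intro h
      exact (pow_dvd_pow 2 h).mul_right _
  by_cases hcnd : 2*(2^b)^2 ∣ 2^a * (2^c*k')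
  · have hle : 2*b+1 ≤ a+c := condiff.mp hcnd
    rw [if_pos hcnd, if_pos hle]
    have hgcd : Nat.gcd (2^b) (2^c*k') = 2^(min b c) := by
      have h := gcdSplit (p:=2) (b:=b) (c:=c) (m':=1) (k':=k') Nat.prime_two (by norm_num) hk2
      simpa using h
    have hA : 2^a * Nat.gcd (2^b) (2^c*k') / (2^b)^2 = 2^(a + min b c - 2*b) := by
      apply Nat.div_eq_of_eq_mul_left (by positivity)
      rw [hgcd, ← pow_add, ← pow_mul, ← pow_add]
      congr 1
      omega
    have hB : (2^c*k') / Nat.gcd (2^b) (2^c*k') = 2^(c - min b c) * k' := by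
      apply Nat.div_eq_of_eq_mul_left (by rw [hgcd]; positivity)
      rw [hgcd, mul_assoc, mul_comm k' (2^(min b c)), ← mul_assoc, ← pow_add]
      congr 2
      omega
    have hpm : pm (2^a) (2^c*k') (2^b) = 0 := by
      unfold pm
      rw [hA]
      rw [Finset.card_eq_zero, Finset.filter_eq_empty_iff]
      intro q hq
      have hq2 : q = 2 := by
        have hqp := Nat.prime_of_mem_primeFactors hq
        have := Nat.dvd_of_mem_primeFactors hq
        exact (Nat.prime_dvd_prime_iff_eq hqp Nat.prime_two).mp (hqp.dvd_of_dvd_pow this)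
      simp [hq2]
    have i1 : Odd (2^(a + min b c - 2*b)) ↔ a + min b c - 2*b = 0 := by
      rw [Nat.odd_iff]
      rcases Nat.eq_zero_or_pos (a + min b c - 2*b) with h | h
      · simp [h]
      · constructor
        · intro hcon
          exfalso
          have : (2:ℕ) ∣ 2^(a + min b c - 2*b) := dvd_pow (dvd_refl 2) (by omega)
          omega
        · omega
    have dvdpow : ∀ x y : ℕ, (2:ℕ)^x ∣ 2^y * k' ↔ x ≤ y := by
      intro x y
      constructor
      · intro h
        have h2 : (2:ℕ)^x ∣ 2^y := by
          first
          | exact (hcopk _).dvd_of_dvd_mul_right h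
          | exact (hcopk _).dvd_of_dvd_mul_left h
        exact (Nat.pow_dvd_pow_iff_le_right (by norm_num)).mp h2
      · intro h
        exact (pow_dvd_pow 2 h).mul_right _
    have i2 : (4 ∣ 2^(c - min b c) * k') ↔ 2 ≤ c - min b c := by
      have : (4:ℕ) = 2^2 := by norm_num
      rw [this, dvdpow]
    have i3 : (2:ℕ)^(a + min b c - 2*b) % 4 = 2 ↔ a + min b c - 2*b = 1 := by
      have m4 : ∀ n : ℕ, n % 4 = 2 ↔ (2 ∣ n ∧ ¬ 4 ∣ n) := by intro n; omega
      rw [m4]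
      have d2 : (2:ℕ) ∣ 2^(a + min b c - 2*b) ↔ 1 ≤ a + min b c - 2*b := by
        have : (2:ℕ) = 2^1 := by norm_num
        nth_rewrite 1 [this]
        rw [Nat.pow_dvd_pow_iff_le_right (by norm_num)]
      have d4 : (4:ℕ) ∣ 2^(a + min b c - 2*b) ↔ 2 ≤ a + min b c - 2*b := by
        have : (4:ℕ) = 2^2 := by norm_num
        rw [this, Nat.pow_dvd_pow_iff_le_right (by norm_num)]
      rw [d2, d4]
      omega
    have i4 : Odd (2^(c - min b c) * k') ↔ c - min b c = 0 := by
      rw [Nat.odd_iff]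
      constructor
      · intro h
        by_contra hcon
        have : (2:ℕ) ∣ 2^(c - min b c) * k' := by
          have : (2:ℕ) ∣ 2^(c - min b c) := dvd_pow (dvd_refl 2) (by omega)
          exact this.mul_right _
        omega
      · intro h
        rw [h, pow_zero, one_mul]
        rw [Nat.two_dvd_ne_zero] at hk2
        omega
    have htm : tm (2^a) (2^c*k') (2^b) =
        if (a + min b c - 2*b = 0 ∨ 2 ≤ c - min b c ∨
            (a + min b c - 2*b = 1 ∧ c - min b c = 0)) then 0 else 1 := by
      unfold tm
      rw [hA, hB]
      exact if_congr (or_congr i1 (or_congr i2 (and_congr i3 i4))) rfl rfl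
    rw [hpm, htm, zero_add]
    by_cases hq : c-1 ≤ b ∧ 2*b+2 ≤ a+c
    · rw [if_neg (show ¬(a + min b c - 2*b = 0 ∨ 2 ≤ c - min b c ∨
          (a + min b c - 2*b = 1 ∧ c - min b c = 0)) by omega), if_pos hq]
      norm_num
    · rw [if_pos (show (a + min b c - 2*b = 0 ∨ 2 ≤ c - min b c ∨
          (a + min b c - 2*b = 1 ∧ c - min b c = 0)) by omega), if_neg hq]
      norm_num
  · rw [if_neg hcnd, if_neg (fun h => hcnd (condiff.mpr h))]

-- from t8.lean
section MainInd
open Nat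
lemma main_ind : ∀ N, 0 < N → Even N → ∀ k, 0 < k → Even k →
    ∑ m ∈ N.divisors.filter (fun m => 2 * m ^ 2 ∣ N * k), 2 ^ (pm N k m + tm N k m)
      = N.divisors.card := by
  intro N
  induction N using Nat.strong_induction_on with
  | _ N ih =>
    intro hN hNeven k hk hkeven
    have hN0 : N ≠ 0 := hN.ne'
    have hk0 : k ≠ 0 := hk.ne'
    have h2N : 2 ∣ N := hNeven.two_dvd
    have h2k : 2 ∣ k := hkeven.two_dvd
    set M := ordCompl[2] N with hM
    have hModd : ¬ 2 ∣ M := Nat.not_dvd_ordCompl Nat.prime_two hN0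
    by_cases hM1 : M = 1
    · -- N = 2^a
      set a := N.factorization 2 with haa
      have hNfac : 2^a * M = N := Nat.ordProj_mul_ordCompl_eq_self N 2
      rw [hM1, mul_one] at hNfac
      have ha : 1 ≤ a := (Nat.Prime.factorization_pos_of_dvd Nat.prime_two hN0 h2N)
      set c := k.factorization 2 with hcc
      set k' := ordCompl[2] k with hk'
      have hkfac : 2^c * k' = k := Nat.ordProj_mul_ordCompl_eq_self k 2
      have hc : 1 ≤ c := (Nat.Prime.factorization_pos_of_dvd Nat.prime_two hk0 h2k)
      have hk'pos : 0 < k' := Nat.ordCompl_pos 2 hk0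
      have hk'odd : ¬ 2 ∣ k' := Nat.not_dvd_ordCompl Nat.prime_two hk0
      rw [← hNfac, ← hkfac]
      rw [Gsum_base ha hc hk'pos hk'odd]
      simp [Nat.divisors_prime_pow Nat.prime_two]
    · -- odd prime p ∣ N
      have hMpos : 0 < M := Nat.ordCompl_pos 2 hN0
      set p := M.minFac with hpdef
      have hp : p.Prime := Nat.minFac_prime hM1
      have hpM : p ∣ M := Nat.minFac_dvd M
      have hp2 : p ≠ 2 := fun h => hModd (h ▸ hpM)
      have hpN : p ∣ N := hpM.trans (Nat.ordCompl_dvd N 2)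
      set e := N.factorization p with hee
      set N' := ordCompl[p] N with hN'def
      have hNfac : p^e * N' = N := Nat.ordProj_mul_ordCompl_eq_self N p
      have he : 1 ≤ e := Nat.Prime.factorization_pos_of_dvd hp hN0 hpN
      have hN'pos : 0 < N' := Nat.ordCompl_pos p hN0
      have hpN' : ¬ p ∣ N' := Nat.not_dvd_ordCompl hp hN0
      have hN'lt : N' < N := by
        rw [← hNfac]
        have h1 : 1 < p^e := Nat.one_lt_pow (by omega) hp.one_lt
        calc N' = 1 * N' := (one_mul N').symm
          _ < p^e * N' := by exact Nat.mul_lt_mul_of_lt_of_le h1 le_rfl hN'pos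
      have hN'even : Even N' := by
        rw [even_iff_two_dvd]
        have h2 : 2 ∣ p^e * N' := hNfac ▸ h2N
        have hcop : Nat.Coprime 2 (p^e) :=
          ((Nat.coprime_primes Nat.prime_two hp).mpr (Ne.symm hp2)).pow_right _
        first
        | exact hcop.dvd_of_dvd_mul_left h2
        | exact hcop.dvd_of_dvd_mul_right h2
      set c := k.factorization p with hcc
      set k' := ordCompl[p] k with hk'def
      have hkfac : p^c * k' = k := Nat.ordProj_mul_ordCompl_eq_self k p
      have hk'pos : 0 < k' := Nat.ordCompl_pos p hk0
      have hpk' : ¬ p ∣ k' := Nat.not_dvd_ordCompl hp hk0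
      rw [← hNfac, ← hkfac]
      rw [Gsum_split hp hp2 hN'pos hk'pos hpN' hpk']
      rw [hkfac]
      rw [ih N' hN'lt hN'pos hN'even k hk hkeven]
      rw [Nat.Coprime.card_divisors_mul (coprime_pow_of_not_dvd hp hpN')]
      congr 1
      simp [Nat.divisors_prime_pow hp]
end MainInd

theorem sum_over_divisors_even_even_case (N k : ℕ) (hN : 0 < N) (hNeven : Even N)
    (hk : 0 < k) (hkeven : Even k) :
    ∑ m ∈ N.divisors.filter (fun m => 2 * m ^ 2 ∣ N * k), 2 ^ (pm N k m + tm N k m)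
      = N.divisors.card :=
  main_ind N hN hNeven k hk hkeven
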